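/- Let M be a ℤ_p[C]-module, finitely generated as a ℤ_p-module, where C = ⟨t⟩ is infinite cyclic and I is the augmentation ideal of ℤ_p[C]. If M(t−1) ⊆ pM, then the natural map M → M̂_I to the I-adic completion is an isomorphism. -/

import Mathlib

open MonoidAlgebra

/-- The infinite cyclic group. -/
abbrev C : Type := Multiplicative ℤ

/-- The augmentation ideal `I = Ker(ℤ_p[C] → ℤ_p)`. -/
noncomputable def augIdeal (p : ℕ) [Fact p.Prime] : Ideal (MonoidAlgebra ℤ_[p] C) :=
  RingHom.ker ((MonoidAlgebra.lift ℤ_[p] ℤ_[p] C) 1).toRingHom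

/-- The generator `t` of `C` viewed inside the group ring `ℤ_p[C]`. -/
noncomputable def tElt (p : ℕ) [Fact p.Prime] : MonoidAlgebra ℤ_[p] C :=
  MonoidAlgebra.of ℤ_[p] C (Multiplicative.ofAdd (1 : ℤ))

section Aux

variable (p : ℕ) [Fact p.Prime]

lemma mul_mem_span_aux {a b : C}
    (ha : of ℤ_[p] C a - 1 ∈ Ideal.span {tElt p - 1})
    (hb : of ℤ_[p] C b - 1 ∈ Ideal.span {tElt p - 1}) :
    of ℤ_[p] C (a * b) - 1 ∈ Ideal.span {tElt p - 1} := by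
  have heq : of ℤ_[p] C (a * b) - 1
      = of ℤ_[p] C a * (of ℤ_[p] C b - 1) + (of ℤ_[p] C a - 1) := by
    rw [map_mul]; ring
  rw [heq]
  exact add_mem (Ideal.mul_mem_left _ _ hb) ha

lemma of_sub_one_mem (a : C) : of ℤ_[p] C a - 1 ∈ Ideal.span {tElt p - 1} := by
  have ht : of ℤ_[p] C (Multiplicative.ofAdd (1 : ℤ)) - 1 ∈ Ideal.span {tElt p - 1} :=
    Ideal.mem_span_singleton_self _
  have htinv : of ℤ_[p] C (Multiplicative.ofAdd (-1 : ℤ)) - 1 ∈ Ideal.span {tElt p - 1} := by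
    have hmul : of ℤ_[p] C (Multiplicative.ofAdd (-1 : ℤ)) * tElt p = 1 := by
      rw [tElt, ← map_mul, ← ofAdd_add]
      norm_num
      simp [MonoidAlgebra.one_def]
    have heq : of ℤ_[p] C (Multiplicative.ofAdd (-1 : ℤ)) - 1
        = -(of ℤ_[p] C (Multiplicative.ofAdd (-1 : ℤ)) * (tElt p - 1)) := by
      rw [mul_sub, hmul]; ring
    rw [heq]
    exact neg_mem (Ideal.mul_mem_left _ _ (Ideal.mem_span_singleton_self _))
  have key : ∀ k : ℤ, of ℤ_[p] C (Multiplicative.ofAdd k) - 1 ∈ Ideal.span {tElt p - 1} := by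
    intro k
    induction k using Int.induction_on with
    | zero => simp [MonoidAlgebra.one_def]
    | succ k ih =>
      have : Multiplicative.ofAdd ((k : ℤ) + 1)
          = Multiplicative.ofAdd (k : ℤ) * Multiplicative.ofAdd (1 : ℤ) := by
        rw [← ofAdd_add]
      rw [this]
      exact mul_mem_span_aux p ih ht
    | pred k ih =>
      have : Multiplicative.ofAdd (-(k : ℤ) - 1)
          = Multiplicative.ofAdd (-(k : ℤ)) * Multiplicative.ofAdd (-1 : ℤ) := by
        rw [← ofAdd_add]; ring_nf
      rw [this]
      exact mul_mem_span_aux p ih htinv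
  exact key (Multiplicative.toAdd a)

set_option synthInstance.maxHeartbeats 1000000 in
noncomputable def augMap : MonoidAlgebra ℤ_[p] C →ₐ[ℤ_[p]] ℤ_[p] :=
  (MonoidAlgebra.lift ℤ_[p] ℤ_[p] C) (1 : C →* ℤ_[p])

lemma augIdeal_le_span : augIdeal p ≤ Ideal.span {tElt p - 1} := by
  intro f hf
  have hf0 : augMap p f = 0 := hf
  have key : ∀ g : MonoidAlgebra ℤ_[p] C,
      g - algebraMap ℤ_[p] (MonoidAlgebra ℤ_[p] C) (augMap p g) ∈ Ideal.span {tElt p - 1} := by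
    intro g
    induction g using MonoidAlgebra.induction_on with
    | of a =>
      have h1 : augMap p (of ℤ_[p] C a) = 1 :=
        MonoidAlgebra.lift_of (R := ℤ_[p]) (A := ℤ_[p]) (1 : C →* ℤ_[p]) a
      rw [h1, map_one]
      exact of_sub_one_mem p a
    | add f g hf hg =>
      have heq : f + g - algebraMap ℤ_[p] (MonoidAlgebra ℤ_[p] C) (augMap p (f + g))
          = (f - algebraMap ℤ_[p] (MonoidAlgebra ℤ_[p] C) (augMap p f))
            + (g - algebraMap ℤ_[p] (MonoidAlgebra ℤ_[p] C) (augMap p g)) := by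
        rw [map_add, map_add]; ring
      rw [heq]
      exact add_mem hf hg
    | smul r f hf =>
      have heq : r • f - algebraMap ℤ_[p] (MonoidAlgebra ℤ_[p] C) (augMap p (r • f))
          = algebraMap ℤ_[p] (MonoidAlgebra ℤ_[p] C) r
            * (f - algebraMap ℤ_[p] (MonoidAlgebra ℤ_[p] C) (augMap p f)) := by
        rw [map_smul, Algebra.smul_def, Algebra.smul_def, mul_sub, ← map_mul]
        norm_num
      rw [heq]
      exact Ideal.mul_mem_left _ _ hf
  have := key f
  rw [hf0, map_zero, sub_zero] at this
  exact this

variable {M : Type} [AddCommGroup M] [Module (MonoidAlgebra ℤ_[p] C) M]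
    [Module ℤ_[p] M] [IsScalarTower ℤ_[p] (MonoidAlgebra ℤ_[p] C) M]

lemma smul_comm_aux (a : MonoidAlgebra ℤ_[p] C) (c : ℤ_[p]) (m : M) :
    a • (c • m) = c • (a • m) := by
  rw [← algebraMap_smul (MonoidAlgebra ℤ_[p] C) c m,
    ← algebraMap_smul (MonoidAlgebra ℤ_[p] C) c (a • m), smul_smul, smul_smul, mul_comm]

lemma aug_smul_eq_p_smul
    (h : ∀ m : M, ∃ m' : M, (tElt p - 1) • m = (p : ℤ_[p]) • m')
    {r : MonoidAlgebra ℤ_[p] C} (hr : r ∈ augIdeal p) (m : M) :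
    ∃ m', r • m = (p : ℤ_[p]) • m' := by
  obtain ⟨s, rfl⟩ := Ideal.mem_span_singleton.mp (augIdeal_le_span p hr)
  obtain ⟨m', hm'⟩ := h (s • m)
  exact ⟨m', by rw [mul_smul, hm']⟩

lemma augPow_smul_eq_pPow_smul
    (h : ∀ m : M, ∃ m' : M, (tElt p - 1) • m = (p : ℤ_[p]) • m') :
    ∀ n : ℕ, ∀ r ∈ (augIdeal p) ^ n, ∀ m : M, ∃ y, r • m = ((p : ℤ_[p]) ^ n) • y := by
  intro n
  induction n with
  | zero => exact fun r _ m => ⟨r • m, by simp⟩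
  | succ n ih =>
    intro r hr m
    rw [pow_succ] at hr
    refine Submodule.mul_induction_on hr (fun a ha b hb => ?_) (fun x y hx hy => ?_)
    · obtain ⟨m₁, h₁⟩ := aug_smul_eq_p_smul p h hb m
      obtain ⟨y, h₂⟩ := ih a ha m₁
      refine ⟨y, ?_⟩
      rw [mul_smul, h₁, smul_comm_aux p, h₂, smul_smul]
      congr 1
      ring
    · obtain ⟨y₁, hy₁⟩ := hx
      obtain ⟨y₂, hy₂⟩ := hy
      exact ⟨y₁ + y₂, by rw [add_smul, hy₁, hy₂, smul_add]⟩

lemma mem_augPow_smul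
    (h : ∀ m : M, ∃ m' : M, (tElt p - 1) • m = (p : ℤ_[p]) • m')
    (n : ℕ) {x : M} (hx : x ∈ ((augIdeal p) ^ n • ⊤ : Submodule (MonoidAlgebra ℤ_[p] C) M)) :
    ∃ y, x = ((p : ℤ_[p]) ^ n) • y := by
  refine Submodule.smul_induction_on hx (fun r hr m _ => ?_) (fun x y hx' hy' => ?_)
  · exact (augPow_smul_eq_pPow_smul p h n r hr m).imp fun y hy => hy
  · obtain ⟨y₁, hy₁⟩ := hx'
    obtain ⟨y₂, hy₂⟩ := hy'
    exact ⟨y₁ + y₂, by rw [hy₁, hy₂, smul_add]⟩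

lemma p_mem_maximalIdeal : (p : ℤ_[p]) ∈ IsLocalRing.maximalIdeal ℤ_[p] := by
  rw [PadicInt.maximalIdeal_eq_span_p]
  exact Ideal.mem_span_singleton_self _

lemma mem_pPow_smul_top_iff (m : ℕ) (x : ℤ_[p]) :
    x ∈ ((IsLocalRing.maximalIdeal ℤ_[p]) ^ m • ⊤ : Submodule ℤ_[p] ℤ_[p]) ↔
      (p : ℤ_[p]) ^ m ∣ x := by
  rw [smul_eq_mul, Ideal.mul_top, PadicInt.maximalIdeal_eq_span_p, Ideal.span_singleton_pow,
    Ideal.mem_span_singleton]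

/-- Hausdorffness of finitely generated `ℤ_p`-modules. -/
lemma haus_aux {N : Type} [AddCommGroup N] [Module ℤ_[p] N] [Module.Finite ℤ_[p] N] (x : N)
    (hx : ∀ n : ℕ, x ∈ ((IsLocalRing.maximalIdeal ℤ_[p]) ^ n • ⊤ : Submodule ℤ_[p] N)) :
    x = 0 := by
  have hbot := Ideal.iInf_pow_smul_eq_bot_of_isLocalRing
    (R := ℤ_[p]) (M := N) (I := IsLocalRing.maximalIdeal ℤ_[p])
    (Ideal.IsMaximal.ne_top inferInstance)
  have hmem : x ∈ (⨅ n : ℕ, (IsLocalRing.maximalIdeal ℤ_[p]) ^ n • ⊤ : Submodule ℤ_[p] N) :=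
    Submodule.mem_iInf _ |>.mpr hx
  rw [hbot] at hmem
  simpa using hmem

/-- Precompleteness of finitely generated `ℤ_p`-modules. -/
lemma precomplete_aux {N : Type} [AddCommGroup N] [Module ℤ_[p] N] [Module.Finite ℤ_[p] N]
    (f : ℕ → N) (hf : ∀ n : ℕ, ∃ d, f (n + 1) - f n = ((p : ℤ_[p]) ^ n) • d) :
    ∃ L : N, ∀ n : ℕ, ∃ e, L - f n = ((p : ℤ_[p]) ^ n) • e := by
  obtain ⟨k, π, hπ⟩ := Module.Finite.exists_fin' ℤ_[p] N
  choose d hd using hf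
  choose v hv using fun n => hπ (d n)
  set w : ℕ → (Fin k → ℤ_[p]) := fun n => ∑ i ∈ Finset.range n, ((p : ℤ_[p]) ^ i) • v i with hw
  have hwval : ∀ n, π (w n) = f n - f 0 := by
    intro n
    induction n with
    | zero => simp [hw]
    | succ n ih =>
      have hstep : w (n + 1) = w n + ((p : ℤ_[p]) ^ n) • v n := by
        simp only [hw, Finset.sum_range_succ]
      rw [hstep, map_add, ih, map_smul, hv, ← hd]
      abel
  have hcauchy : ∀ j : Fin k, ∃ L : ℤ_[p], ∀ n, w n j ≡ L
      [SMOD ((IsLocalRing.maximalIdeal ℤ_[p]) ^ n • ⊤ : Submodule ℤ_[p] ℤ_[p])] := by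
    intro j
    apply IsPrecomplete.prec (inferInstance : IsPrecomplete (IsLocalRing.maximalIdeal ℤ_[p]) ℤ_[p])
    intro m n hmn
    rw [SModEq.sub_mem, mem_pPow_smul_top_iff]
    have : w m j - w n j = -(∑ i ∈ Finset.Ico m n, ((p : ℤ_[p]) ^ i) * v i j) := by
      simp only [hw, Finset.sum_apply, Pi.smul_apply, smul_eq_mul]
      rw [Finset.sum_Ico_eq_sub _ hmn]
      ring
    rw [this]
    refine dvd_neg.mpr (Finset.dvd_sum fun i hi => ?_)
    exact Dvd.dvd.mul_right (pow_dvd_pow _ (Finset.mem_Ico.mp hi).1) _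
  choose Lc hLc using hcauchy
  refine ⟨f 0 + π Lc, fun n => ?_⟩
  have hdvd : ∀ j : Fin k, ∃ c, Lc j - w n j = (p : ℤ_[p]) ^ n * c := by
    intro j
    have := (hLc j n).symm
    rw [SModEq.sub_mem, mem_pPow_smul_top_iff] at this
    exact this
  choose c hc using hdvd
  refine ⟨π c, ?_⟩
  have hLw : Lc - w n = ((p : ℤ_[p]) ^ n) • c := by
    funext j
    simpa [mul_comm] using hc j
  have : f 0 + π Lc - f n = π (Lc - w n) := by
    rw [map_sub, hwval]
    abel
  rw [this, hLw, map_smul]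

end Aux

/-- Let `M` be a `ℤ_p[C]`-module, finitely generated as a `ℤ_p`-module.
If `M(t−1) ⊆ pM`, then the natural map `M → M̂_I` to the `I`-adic completion is an
isomorphism. -/
theorem bousfield_stmt13 (p : ℕ) [Fact p.Prime]
    (M : Type) [AddCommGroup M] [Module (MonoidAlgebra ℤ_[p] C) M]
    [Module ℤ_[p] M] [IsScalarTower ℤ_[p] (MonoidAlgebra ℤ_[p] C) M] [Module.Finite ℤ_[p] M]
    (h : ∀ m : M, ∃ m' : M, (tElt p - 1) • m = (p : ℤ_[p]) • m') :
    Function.Bijective (AdicCompletion.of (augIdeal p) M) := by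
  constructor
  · -- injectivity
    intro x y hxy
    have hmem : ∀ n : ℕ, x - y ∈ ((augIdeal p) ^ n • ⊤ : Submodule (MonoidAlgebra ℤ_[p] C) M) := by
      intro n
      have := congrFun (congrArg Subtype.val hxy) n
      rw [AdicCompletion.of_apply, AdicCompletion.of_apply, Submodule.mkQ_apply,
        Submodule.mkQ_apply] at this
      exact (Submodule.Quotient.eq _).mp this
    have hfinal : x - y = 0 := by
      apply haus_aux p
      intro n
      obtain ⟨z, hz⟩ := mem_augPow_smul p h n (hmem n)
      rw [hz]
      exact Submodule.smul_mem_smul (Ideal.pow_mem_pow (p_mem_maximalIdeal p) n) Submodule.mem_top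
    exact sub_eq_zero.mp hfinal
  · -- surjectivity
    intro x
    obtain ⟨f, rfl⟩ := AdicCompletion.mk_surjective (augIdeal p) M x
    have hstep : ∀ n : ℕ, ∃ d, f.val (n + 1) - f.val n = ((p : ℤ_[p]) ^ n) • d := by
      intro n
      refine mem_augPow_smul p h n ?_
      have := f.property (Nat.le_succ n)
      exact SModEq.sub_mem.mp this.symm
    obtain ⟨L, hL⟩ := precomplete_aux p f.val hstep
    refine ⟨L, ?_⟩
    ext n
    rw [AdicCompletion.of_apply, AdicCompletion.mk_apply_coe, Submodule.mkQ_apply,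
      Submodule.mkQ_apply]
    rw [Submodule.Quotient.eq]
    -- closedness argument
    set N : Submodule ℤ_[p] M :=
      ((augIdeal p) ^ n • ⊤ : Submodule (MonoidAlgebra ℤ_[p] C) M).restrictScalars ℤ_[p] with hN
    show L - f.val n ∈ N
    have hq : ∀ m : ℕ, Submodule.Quotient.mk (p := N) (L - f.val n) ∈
        ((IsLocalRing.maximalIdeal ℤ_[p]) ^ m • ⊤ : Submodule ℤ_[p] (M ⧸ N)) := by
      intro m
      obtain ⟨e, he⟩ := hL (max n m)
      have h2 : f.val (max n m) - f.val n ∈ N := by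
        have := f.property (le_max_left n m)
        exact SModEq.sub_mem.mp this.symm
      have heq : L - f.val n = ((p : ℤ_[p]) ^ (max n m)) • e + (f.val (max n m) - f.val n) := by
        rw [← he]; abel
      rw [heq, Submodule.Quotient.mk_add, (Submodule.Quotient.mk_eq_zero N).mpr h2, add_zero,
        Submodule.Quotient.mk_smul]
      refine Submodule.smul_mem_smul ?_ Submodule.mem_top
      exact Ideal.pow_le_pow_right (le_max_right n m)
        (Ideal.pow_mem_pow (p_mem_maximalIdeal p) (max n m))
    have := haus_aux p (Submodule.Quotient.mk (p := N) (L - f.val n)) hq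
    exact (Submodule.Quotient.mk_eq_zero N).mp this
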